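/- Let Δ ⊃ Δ' be two simplicial complexes on [m]. Then x ∈ r(A_{Δ'}) if and only if x ∈ r(A_Δ) and ∂_E x = 0 for all E ∈ Δ ∖ Δ'. -/

import Mathlib

open Finset

namespace Hier

variable {m : ℕ}

abbrev Cell (I : Fin m → ℕ) := ∀ j, Fin (I j)

variable (I : Fin m → ℕ)

/-- standard inner product on ℚ^I -/
def dot (x y : Cell I → ℚ) : ℚ := ∑ i, x i * y i

/-- L_E: tables depending only on the coordinates in E -/
def LL (E : Finset (Fin m)) : Submodule ℚ (Cell I → ℚ) where
  carrier := {x | ∀ i i' : Cell I, (∀ j ∈ E, i j = i' j) → x i = x i'}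
  zero_mem' := by intro i i' _; rfl
  add_mem' := by
    intro a b ha hb i i' h
    simp only [Pi.add_apply, ha i i' h, hb i i' h]
  smul_mem' := by
    intro c a ha i i' h
    simp only [Pi.smul_apply, ha i i' h]

/-- orthogonal complement w.r.t. the standard inner product -/
def perp (S : Submodule ℚ (Cell I → ℚ)) : Submodule ℚ (Cell I → ℚ) where
  carrier := {y | ∀ x ∈ S, dot I x y = 0}
  zero_mem' := by intro x hx; simp [dot]
  add_mem' := by
    intro a b ha hb x hx
    have h1 := ha x hx
    have h2 := hb x hx
    simp only [dot, Pi.add_apply, mul_add, Finset.sum_add_distrib] at *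
    rw [h1, h2]; ring
  smul_mem' := by
    intro c a ha x hx
    have h1 := ha x hx
    simp only [dot, Pi.smul_apply, smul_eq_mul] at *
    calc ∑ i, x i * (c * a i) = c * ∑ i, x i * a i := by
          rw [Finset.mul_sum]; congr 1; funext i; ring
      _ = 0 := by rw [h1]; ring

/-- incremental subspace N_E -/
def NN (E : Finset (Fin m)) : Submodule ℚ (Cell I → ℚ) :=
  LL I E ⊓ perp I (⨆ j ∈ E, LL I (E.erase j))

/-- F-marginal of x evaluated at the marginal cell i_F -/
def marg (x : Cell I → ℚ) (F : Finset (Fin m)) (i : Cell I) : ℚ :=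
  ∑ j : Cell I, if ∀ k ∈ F, j k = i k then x j else 0

/-- kernel of the configuration determined by a family of facets:
tables all of whose F-marginals vanish, F ∈ Fs -/
def kern (Fs : Finset (Finset (Fin m))) : Submodule ℚ (Cell I → ℚ) where
  carrier := {y | ∀ F ∈ Fs, ∀ i, marg I y F i = 0}
  zero_mem' := by intro F hF i; simp [marg]
  add_mem' := by
    intro a b ha hb F hF i
    have h1 := ha F hF i
    have h2 := hb F hF i
    simp only [marg, Pi.add_apply] at *
    have key : (∑ j : Cell I, if ∀ k ∈ F, j k = i k then a j + b j else 0)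
        = (∑ j : Cell I, if ∀ k ∈ F, j k = i k then a j else 0)
          + (∑ j : Cell I, if ∀ k ∈ F, j k = i k then b j else 0) := by
      rw [← Finset.sum_add_distrib]
      apply Finset.sum_congr rfl
      intro j _
      split <;> simp
    rw [key, h1, h2]; ring
  smul_mem' := by
    intro c a ha F hF i
    have h1 := ha F hF i
    simp only [marg, Pi.smul_apply, smul_eq_mul] at *
    calc ∑ j : Cell I, (if ∀ k ∈ F, j k = i k then c * a j else 0)
        = c * ∑ j : Cell I, (if ∀ k ∈ F, j k = i k then a j else 0) := by
          rw [Finset.mul_sum]; congr 1; funext j; split <;> simp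
      _ = 0 := by rw [h1]; ring

/-- a (finite) abstract simplicial complex on [m] -/
def IsComplex (Δ : Finset (Finset (Fin m))) : Prop :=
  ∀ F ∈ Δ, ∀ F' ⊆ F, F' ∈ Δ

/-- the maximal elements (facets) of Δ -/
def facets (Δ : Finset (Finset (Fin m))) : Finset (Finset (Fin m)) :=
  Δ.filter (fun D => ∀ F ∈ Δ, D ⊆ F → F = D)

/-- row space of the hierarchical-model configuration A_Δ -/
def rowsp (Δ : Finset (Finset (Fin m))) : Submodule ℚ (Cell I → ℚ) :=
  ⨆ D ∈ facets Δ, LL I D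

/-- single partial difference operator ∂_j -/
def pd1 (hI : ∀ j, 0 < I j) (j : Fin m) (x : Cell I → ℚ) : Cell I → ℚ :=
  fun i => x i - x (Function.update i j ⟨0, hI j⟩)

/-- ∂_E: composition of the (commuting) ∂_j, j ∈ E -/
noncomputable def pdE (hI : ∀ j, 0 < I j) (E : Finset (Fin m)) : (Cell I → ℚ) → (Cell I → ℚ) :=
  E.toList.foldr (fun j f => pd1 I hI j ∘ f) id



/-! ### Auxiliary machinery -/

lemma foldr_comp_perm {α β : Type*} (g : β → α → α)
    (hg : ∀ a b, g a ∘ g b = g b ∘ g a)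
    {l₁ l₂ : List β} (h : l₁.Perm l₂) :
    l₁.foldr (fun j f => g j ∘ f) id = l₂.foldr (fun j f => g j ∘ f) id := by
  induction h with
  | nil => rfl
  | cons a _ ih => simp only [List.foldr_cons, ih]
  | swap a b l =>
      show g b ∘ (g a ∘ _) = g a ∘ (g b ∘ _)
      rw [← Function.comp_assoc, ← Function.comp_assoc, hg]
  | trans _ _ ih₁ ih₂ => rw [ih₁, ih₂]

section Aux

variable (hI0 : ∀ j, 0 < I j)

/-- evaluation with coordinate `j` set to `0` -/
def P0 (j : Fin m) (x : Cell I → ℚ) : Cell I → ℚ :=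
  fun i => x (Function.update i j ⟨0, hI0 j⟩)

noncomputable def QQ (S : Finset (Fin m)) : (Cell I → ℚ) → (Cell I → ℚ) :=
  S.toList.foldr (fun j f => P0 I hI0 j ∘ f) id

lemma P0_comm (j k : Fin m) : P0 I hI0 j ∘ P0 I hI0 k = P0 I hI0 k ∘ P0 I hI0 j := by
  rcases eq_or_ne j k with rfl | h
  · rfl
  · funext x i
    simp only [Function.comp_apply, P0, Function.update_comm h]

lemma pd1_comm (j k : Fin m) : pd1 I hI0 j ∘ pd1 I hI0 k = pd1 I hI0 k ∘ pd1 I hI0 j := by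
  rcases eq_or_ne j k with rfl | h
  · rfl
  · funext x i
    simp only [Function.comp_apply, pd1]
    rw [Function.update_comm h]
    ring

lemma P0_pd1_comm (j k : Fin m) : P0 I hI0 j ∘ pd1 I hI0 k = pd1 I hI0 k ∘ P0 I hI0 j := by
  rcases eq_or_ne j k with rfl | h
  · funext x i
    simp [P0, pd1, Function.update_idem]
  · funext x i
    simp only [Function.comp_apply, pd1, P0, Function.update_comm h]

lemma pdE_insert {a : Fin m} {E : Finset (Fin m)} (h : a ∉ E) :
    pdE I hI0 (insert a E) = pd1 I hI0 a ∘ pdE I hI0 E :=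
  foldr_comp_perm _ (pd1_comm I hI0) (Finset.toList_insert h)

lemma pdE_erase {a : Fin m} {E : Finset (Fin m)} (h : a ∈ E) :
    pdE I hI0 E = pd1 I hI0 a ∘ pdE I hI0 (E.erase a) := by
  conv_lhs => rw [← Finset.insert_erase h]
  exact pdE_insert I hI0 (Finset.notMem_erase a E)

lemma QQ_insert {a : Fin m} {S : Finset (Fin m)} (h : a ∉ S) :
    QQ I hI0 (insert a S) = P0 I hI0 a ∘ QQ I hI0 S :=
  foldr_comp_perm _ (P0_comm I hI0) (Finset.toList_insert h)

lemma QQ_empty : QQ I hI0 (∅ : Finset (Fin m)) = id := by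
  show (∅ : Finset (Fin m)).toList.foldr (fun j f => P0 I hI0 j ∘ f) id = id
  rw [Finset.toList_empty, List.foldr_nil]

lemma QQ_pd1_comm (a : Fin m) (S : Finset (Fin m)) :
    QQ I hI0 S ∘ pd1 I hI0 a = pd1 I hI0 a ∘ QQ I hI0 S := by
  induction S using Finset.induction_on with
  | empty => rw [QQ_empty]; rfl
  | @insert b S hb ih =>
      rw [QQ_insert I hI0 hb, Function.comp_assoc, ih, ← Function.comp_assoc,
        P0_pd1_comm, Function.comp_assoc]

lemma pd1_add (j : Fin m) (x y : Cell I → ℚ) :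
    pd1 I hI0 j (x + y) = pd1 I hI0 j x + pd1 I hI0 j y := by
  funext i; simp only [pd1, Pi.add_apply]; ring

lemma pd1_smul (c : ℚ) (j : Fin m) (x : Cell I → ℚ) :
    pd1 I hI0 j (c • x) = c • pd1 I hI0 j x := by
  funext i; simp only [pd1, Pi.smul_apply, smul_eq_mul]; ring

lemma pd1_zero (j : Fin m) : pd1 I hI0 j (0 : Cell I → ℚ) = 0 := by
  funext i; simp [pd1]

lemma pdL_add (l : List (Fin m)) (x y : Cell I → ℚ) :
    l.foldr (fun j f => pd1 I hI0 j ∘ f) id (x + y)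
      = l.foldr (fun j f => pd1 I hI0 j ∘ f) id x
        + l.foldr (fun j f => pd1 I hI0 j ∘ f) id y := by
  induction l with
  | nil => rfl
  | cons a l ih => simp only [List.foldr_cons, Function.comp_apply, ih, pd1_add]

lemma pdL_smul (l : List (Fin m)) (c : ℚ) (x : Cell I → ℚ) :
    l.foldr (fun j f => pd1 I hI0 j ∘ f) id (c • x)
      = c • l.foldr (fun j f => pd1 I hI0 j ∘ f) id x := by
  induction l with
  | nil => rfl
  | cons a l ih => simp only [List.foldr_cons, Function.comp_apply, ih, pd1_smul]

lemma pdL_zero (l : List (Fin m)) :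
    l.foldr (fun j f => pd1 I hI0 j ∘ f) id (0 : Cell I → ℚ) = 0 := by
  induction l with
  | nil => rfl
  | cons a l ih => simp only [List.foldr_cons, Function.comp_apply, ih, pd1_zero]

lemma pdE_add (E : Finset (Fin m)) (x y : Cell I → ℚ) :
    pdE I hI0 E (x + y) = pdE I hI0 E x + pdE I hI0 E y :=
  pdL_add I hI0 E.toList x y

lemma pdE_smul (E : Finset (Fin m)) (c : ℚ) (x : Cell I → ℚ) :
    pdE I hI0 E (c • x) = c • pdE I hI0 E x :=
  pdL_smul I hI0 E.toList c x

lemma pdE_zero (E : Finset (Fin m)) : pdE I hI0 E (0 : Cell I → ℚ) = 0 :=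
  pdL_zero I hI0 E.toList

lemma P0_zero (j : Fin m) : P0 I hI0 j (0 : Cell I → ℚ) = 0 := rfl

lemma QQ_zero (S : Finset (Fin m)) : QQ I hI0 S (0 : Cell I → ℚ) = 0 := by
  show S.toList.foldr (fun j f => P0 I hI0 j ∘ f) id (0 : Cell I → ℚ) = 0
  induction S.toList with
  | nil => rfl
  | cons a l ih => simp only [List.foldr_cons, Function.comp_apply, ih, P0_zero]

lemma LL_mono {D F : Finset (Fin m)} (h : D ⊆ F) : LL I D ≤ LL I F :=
  fun x hx i i' hii => hx i i' fun j hj => hii j (h hj)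

lemma pd1_mem_LL {D : Finset (Fin m)} {x : Cell I → ℚ} (hx : x ∈ LL I D) (j : Fin m) :
    pd1 I hI0 j x ∈ LL I D := by
  intro i i' h
  have h2 : ∀ k ∈ D, Function.update i j ⟨0, hI0 j⟩ k = Function.update i' j ⟨0, hI0 j⟩ k := by
    intro k hk
    rcases eq_or_ne k j with rfl | hne
    · simp
    · rw [Function.update_of_ne hne, Function.update_of_ne hne]; exact h k hk
  show x i - _ = x i' - _
  rw [hx i i' h, hx _ _ h2]

lemma pdL_mem_LL {D : Finset (Fin m)} (l : List (Fin m)) {x : Cell I → ℚ} (hx : x ∈ LL I D) :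
    l.foldr (fun j f => pd1 I hI0 j ∘ f) id x ∈ LL I D := by
  induction l with
  | nil => exact hx
  | cons a l ih => exact pd1_mem_LL I hI0 ih a

lemma pd1_eq_zero {D : Finset (Fin m)} {x : Cell I → ℚ} (hx : x ∈ LL I D) {j : Fin m}
    (hj : j ∉ D) : pd1 I hI0 j x = 0 := by
  funext i
  have hupd : x (Function.update i j ⟨0, hI0 j⟩) = x i :=
    hx _ _ fun k hk => Function.update_of_ne (by rintro rfl; exact hj hk) _ _
  simp [pd1, hupd]

lemma pdE_eq_zero {D E : Finset (Fin m)} {x : Cell I → ℚ} (hx : x ∈ LL I D)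
    (hE : ¬ E ⊆ D) : pdE I hI0 E x = 0 := by
  obtain ⟨j, hjE, hjD⟩ := Finset.not_subset.mp hE
  rw [pdE_erase I hI0 hjE]
  show pd1 I hI0 j (pdE I hI0 (E.erase j) x) = 0
  exact pd1_eq_zero I hI0 (pdL_mem_LL I hI0 (E.erase j).toList hx) hjD

lemma P0_mem {T : Finset (Fin m)} {x : Cell I → ℚ} (hx : x ∈ LL I T) (a : Fin m) :
    P0 I hI0 a x ∈ LL I (T.erase a) := by
  intro i i' h
  show x _ = x _
  apply hx
  intro k hk
  rcases eq_or_ne k a with rfl | hne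
  · simp
  · rw [Function.update_of_ne hne, Function.update_of_ne hne]
    exact h k (Finset.mem_erase.mpr ⟨hne, hk⟩)

lemma QQ_mem (S : Finset (Fin m)) (x : Cell I → ℚ) :
    QQ I hI0 S x ∈ LL I (Finset.univ \ S) := by
  induction S using Finset.induction_on with
  | empty =>
      intro i i' h
      have hii : i = i' := funext fun j => h j (by simp)
      rw [hii]
  | @insert a S ha ih =>
      rw [QQ_insert I hI0 ha, Finset.sdiff_insert]
      exact P0_mem I hI0 ih a

lemma decomp (S : Finset (Fin m)) (x : Cell I → ℚ) :
    ∑ E ∈ S.powerset, QQ I hI0 (S \ E) (pdE I hI0 E x) = x := by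
  induction S using Finset.induction_on with
  | empty => simp [QQ, pdE]
  | @insert a S ha ih =>
    have hdisj : Disjoint S.powerset (S.powerset.image (insert a)) := by
      rw [Finset.disjoint_left]
      intro E hE hE'
      obtain ⟨F, hF, rfl⟩ := Finset.mem_image.mp hE'
      exact ha (Finset.mem_powerset.mp hE (Finset.mem_insert_self a F))
    have hinj : ∀ F ∈ S.powerset, ∀ F' ∈ S.powerset, insert a F = insert a F' → F = F' := by
      intro F hF F' hF' hFF
      have haF : a ∉ F := fun h => ha (Finset.mem_powerset.mp hF h)
      have haF' : a ∉ F' := fun h => ha (Finset.mem_powerset.mp hF' h)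
      rw [← Finset.erase_insert haF, ← Finset.erase_insert haF', hFF]
    rw [Finset.powerset_insert, Finset.sum_union hdisj, Finset.sum_image hinj]
    have key : ∀ E ∈ S.powerset,
        QQ I hI0 (insert a S \ E) (pdE I hI0 E x)
          + QQ I hI0 (insert a S \ insert a E) (pdE I hI0 (insert a E) x)
        = QQ I hI0 (S \ E) (pdE I hI0 E x) := by
      intro E hE
      have hES : E ⊆ S := Finset.mem_powerset.mp hE
      have haE : a ∉ E := fun h => ha (hES h)
      have h1 : insert a S \ E = insert a (S \ E) := by
        ext k; simp only [Finset.mem_sdiff, Finset.mem_insert]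
        constructor
        · rintro ⟨(rfl | hk), hkE⟩
          · exact Or.inl rfl
          · exact Or.inr ⟨hk, hkE⟩
        · rintro (rfl | ⟨hk, hkE⟩)
          · exact ⟨Or.inl rfl, haE⟩
          · exact ⟨Or.inr hk, hkE⟩
      have h2 : insert a S \ insert a E = S \ E := by
        ext k; simp only [Finset.mem_sdiff, Finset.mem_insert]
        constructor
        · rintro ⟨(rfl | hk), hkE⟩
          · exact absurd (Or.inl rfl) hkE
          · exact ⟨hk, fun h => hkE (Or.inr h)⟩
        · rintro ⟨hk, hkE⟩
          exact ⟨Or.inr hk, by rintro (rfl | h); exacts [ha hk, hkE h]⟩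
      have haSE : a ∉ S \ E := fun h => ha (Finset.mem_sdiff.mp h).1
      rw [h1, h2, QQ_insert I hI0 haSE, pdE_insert I hI0 haE]
      show P0 I hI0 a (QQ I hI0 (S \ E) (pdE I hI0 E x))
          + QQ I hI0 (S \ E) (pd1 I hI0 a (pdE I hI0 E x)) = _
      rw [show QQ I hI0 (S \ E) (pd1 I hI0 a (pdE I hI0 E x))
            = pd1 I hI0 a (QQ I hI0 (S \ E) (pdE I hI0 E x)) from
          congrFun (QQ_pd1_comm I hI0 a (S \ E)) _]
      funext i
      simp only [Pi.add_apply, P0, pd1]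
      ring
    rw [← Finset.sum_add_distrib, Finset.sum_congr rfl key, ih]

lemma facets_subset {Δ : Finset (Finset (Fin m))} : facets Δ ⊆ Δ :=
  Finset.filter_subset _ _

lemma exists_facet {Δ : Finset (Finset (Fin m))} {F : Finset (Fin m)} (hF : F ∈ Δ) :
    ∃ D ∈ facets Δ, F ⊆ D := by
  obtain ⟨D, hD, hmax⟩ := Finset.exists_max_image (Δ.filter fun G => F ⊆ G)
    Finset.card ⟨F, Finset.mem_filter.mpr ⟨hF, Finset.Subset.refl F⟩⟩
  rw [Finset.mem_filter] at hD
  refine ⟨D, Finset.mem_filter.mpr ⟨hD.1, fun G hG hDG => ?_⟩, hD.2⟩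
  exact (Finset.eq_of_subset_of_card_le hDG
    (hmax G (Finset.mem_filter.mpr ⟨hG, hD.2.trans hDG⟩))).symm

lemma LL_le_rowsp {Δ : Finset (Finset (Fin m))} {D : Finset (Fin m)} (hD : D ∈ Δ) :
    LL I D ≤ rowsp I Δ := by
  obtain ⟨G, hG, hDG⟩ := exists_facet hD
  exact le_trans (LL_mono I hDG) (le_iSup₂_of_le G hG le_rfl)

/-- the submodule of tables all of whose `∂_E`, `E ∉ Δ`, vanish -/
def kerPD (Δ : Finset (Finset (Fin m))) : Submodule ℚ (Cell I → ℚ) where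
  carrier := {y | ∀ E : Finset (Fin m), E ∉ Δ → pdE I hI0 E y = 0}
  zero_mem' := fun E _ => pdE_zero I hI0 E
  add_mem' := by
    intro a b ha hb E hE
    rw [pdE_add, ha E hE, hb E hE, add_zero]
  smul_mem' := by
    intro c a ha E hE
    rw [pdE_smul, ha E hE, smul_zero]

lemma rowsp_mono {Δ Δ' : Finset (Finset (Fin m))} (hsub : Δ' ⊆ Δ) :
    rowsp I Δ' ≤ rowsp I Δ :=
  iSup₂_le fun D hD => LL_le_rowsp I (hsub (facets_subset hD))

lemma rowsp_le_kerPD {Δ : Finset (Finset (Fin m))} (hΔ : IsComplex Δ) :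
    rowsp I Δ ≤ kerPD I hI0 Δ := by
  refine iSup₂_le fun D hD => ?_
  intro y hy E hE
  exact pdE_eq_zero I hI0 hy fun hsub => hE (hΔ D (facets_subset hD) E hsub)

lemma mem_rowsp_of_pd {Δ' : Finset (Finset (Fin m))} {x : Cell I → ℚ}
    (h : ∀ E : Finset (Fin m), E ∉ Δ' → pdE I hI0 E x = 0) : x ∈ rowsp I Δ' := by
  rw [← decomp I hI0 Finset.univ x]
  refine Submodule.sum_mem _ fun E _ => ?_
  by_cases hEΔ : E ∈ Δ'
  · refine LL_le_rowsp I hEΔ ?_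
    have hmem := QQ_mem I hI0 (Finset.univ \ E) (pdE I hI0 E x)
    rwa [Finset.sdiff_sdiff_self_left, Finset.univ_inter] at hmem
  · rw [h E hEΔ, QQ_zero]
    exact Submodule.zero_mem _

end Aux

/-- Proposition 4: for complexes `Δ ⊇ Δ'`, `x ∈ r(A_{Δ'})` iff `x ∈ r(A_Δ)` and
`∂_E x = 0` for all `E ∈ Δ ∖ Δ'`. -/
theorem stmt13 (hI : ∀ j, 2 ≤ I j) (hI0 : ∀ j, 0 < I j)
    (Δ Δ' : Finset (Finset (Fin m))) (hΔ : IsComplex Δ) (hΔ' : IsComplex Δ')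
    (hsub : Δ' ⊆ Δ) (x : Cell I → ℚ) :
    x ∈ rowsp I Δ' ↔ (x ∈ rowsp I Δ ∧ ∀ E ∈ Δ \ Δ', pdE I hI0 E x = 0) := by
  constructor
  · intro hx
    refine ⟨?_, fun E hE => ?_⟩
    · exact rowsp_mono I hsub hx
    · exact rowsp_le_kerPD I hI0 hΔ' hx E (Finset.mem_sdiff.mp hE).2
  · rintro ⟨hx, hE⟩
    refine mem_rowsp_of_pd I hI0 fun E hEΔ' => ?_
    by_cases hEΔ : E ∈ Δ
    · exact hE E (Finset.mem_sdiff.mpr ⟨hEΔ, hEΔ'⟩)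
    · exact rowsp_le_kerPD I hI0 hΔ hx E hEΔ


end Hier
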